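/- arXiv:math/0412329 — 2 statements merged into one kernel-verified Lean document; each statement's English description precedes it below -/
import Mathlib

section
/- Let A be an integral domain, let B be a commutative A-algebra that is flat as an A-module, and let f ∈ A. If the localization of B away from the image of f (i.e. B_f = B[1/f]) is an integral domain, then B is an integral domain. -/
/-- Let `A` be an integral domain, `B` a commutative `A`-algebra that is flat as an
`A`-module, and `f ∈ A`. If the localization `B_f = B[1/f]` of `B` away from the image
of `f` is an integral domain, then `B` is an integral domain. -/
theorem flat_algebra_isDomain_of_isDomain_away
    {A B : Type*} [CommRing A] [IsDomain A] [CommRing B] [Algebra A B]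
    [Module.Flat A B] (f : A)
    (h : IsDomain (Localization.Away (algebraMap A B f))) :
    IsDomain B := by
  set g : B := algebraMap A B f with hg
  -- f ≠ 0
  have hf : f ≠ 0 := by
    rintro rfl
    have hg0 : g = 0 := by simp [hg]
    have : (0 : B) ∈ Submonoid.powers g := ⟨1, by simp [hg0]⟩
    have : Subsingleton (Localization.Away g) :=
      IsLocalization.subsingleton (S := Localization.Away g) this
    exact not_subsingleton _ this
  -- f acts regularly on A, hence on B by flatness
  have hA : IsSMulRegular A f := fun x y hxy => by
    simpa using mul_left_cancel₀ hf (by simpa [smul_eq_mul] using hxy)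
  have hB' : IsSMulRegular (TensorProduct A B A) f := hA.lTensor B
  have hB : IsSMulRegular B f :=
    hB'.of_injective (TensorProduct.rid A B).symm.toLinearMap
      (TensorProduct.rid A B).symm.injective
  have hgB : IsSMulRegular B g := (isSMulRegular_algebraMap_iff (A := B) (M := B) (r := f)).mpr hB
  have hgnzd : g ∈ nonZeroDivisors B := by
    rw [mem_nonZeroDivisors_iff_right]
    intro y hy
    have : g • y = g • (0 : B) := by simpa [smul_eq_mul, mul_comm] using hy
    simpa using hgB this
  have hle : Submonoid.powers g ≤ nonZeroDivisors B :=
    Submonoid.powers_le.mpr hgnzd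
  have hinj : Function.Injective (algebraMap B (Localization.Away g)) :=
    IsLocalization.injective (Localization.Away g) hle
  exact Function.Injective.isDomain (algebraMap B (Localization.Away g)) hinj
end

section
/- Let k be a field and let A be a finitely generated commutative k-algebra. Then A is generated as a k-algebra by its group of units Aˣ if and only if there exist a natural number n and a surjective k-algebra homomorphism from the Laurent polynomial algebra k[t₁^{±1},…,t_n^{±1}] (the monoid algebra of the free abelian group ℤⁿ over k) onto A. (This expresses the fact that a connected affine variety X is a closed subvariety of an algebraic torus if and only if its ring of regular functions O(X) is generated by its units O*(X); such varieties are called very affine.) -/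
/-- Compactness: an element of `adjoin R s` lies in the adjoin of a finite subset. -/
lemma mem_adjoin_finset_of_mem_adjoin {R A : Type*} [CommSemiring R] [CommSemiring A]
    [Algebra R A] {s : Set A} {x : A} (hx : x ∈ Algebra.adjoin R s) :
    ∃ t : Finset A, ↑t ⊆ s ∧ x ∈ Algebra.adjoin R (t : Set A) := by
  classical
  induction hx using Algebra.adjoin_induction with
  | mem y hy => exact ⟨{y}, by simpa using hy, Algebra.subset_adjoin (by simp)⟩
  | algebraMap r => exact ⟨∅, by simp, Subalgebra.algebraMap_mem _ r⟩
  | add y z _ _ hy hz =>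
      obtain ⟨t₁, ht₁, hy⟩ := hy
      obtain ⟨t₂, ht₂, hz⟩ := hz
      refine ⟨t₁ ∪ t₂, by rw [Finset.coe_union]; exact Set.union_subset ht₁ ht₂, ?_⟩
      exact add_mem
        (Algebra.adjoin_mono (by rw [Finset.coe_union]; exact Set.subset_union_left) hy)
        (Algebra.adjoin_mono (by rw [Finset.coe_union]; exact Set.subset_union_right) hz)
  | mul y z _ _ hy hz =>
      obtain ⟨t₁, ht₁, hy⟩ := hy
      obtain ⟨t₂, ht₂, hz⟩ := hz
      refine ⟨t₁ ∪ t₂, by rw [Finset.coe_union]; exact Set.union_subset ht₁ ht₂, ?_⟩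
      exact mul_mem
        (Algebra.adjoin_mono (by rw [Finset.coe_union]; exact Set.subset_union_left) hy)
        (Algebra.adjoin_mono (by rw [Finset.coe_union]; exact Set.subset_union_right) hz)

/-- A finitely generated commutative algebra `A` over a field `k` is generated as a
`k`-algebra by its units if and only if it is a quotient of some Laurent polynomial
algebra `k[t₁^{±1}, …, t_n^{±1}]` (the monoid algebra of the free abelian group `ℤⁿ`
over `k`).  Geometrically: a connected affine variety is a closed subvariety of an
algebraic torus iff its ring of regular functions is generated by units
("very affine" varieties). -/
theorem adjoin_units_eq_top_iff_surjective_from_laurent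
    {k A : Type*} [Field k] [CommRing A] [Algebra k A]
    (hA : Algebra.FiniteType k A) :
    Algebra.adjoin k {a : A | IsUnit a} = ⊤ ↔
      ∃ (n : ℕ) (φ : AddMonoidAlgebra k (Fin n →₀ ℤ) →ₐ[k] A),
        Function.Surjective φ := by
  classical
  constructor
  · intro htop
    obtain ⟨S, hS⟩ := hA.out
    -- for each generator, a finite set of units
    have hfin : ∀ s ∈ S, ∃ t : Finset A, ↑t ⊆ {a : A | IsUnit a} ∧
        s ∈ Algebra.adjoin k (t : Set A) := fun s _ =>
      mem_adjoin_finset_of_mem_adjoin (htop ▸ Algebra.mem_top)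
    choose t ht hmem using hfin
    set T : Finset A := S.attach.biUnion (fun s => t s.1 s.2) with hT
    have hTsub : (T : Set A) ⊆ {a : A | IsUnit a} := by
      intro a ha
      simp only [hT, Finset.coe_biUnion, Set.mem_iUnion] at ha
      obtain ⟨s, hs, has⟩ := ha
      exact ht s.1 s.2 has
    have hTtop : Algebra.adjoin k (T : Set A) = ⊤ := by
      rw [eq_top_iff, ← hS, Algebra.adjoin_le_iff]
      intro s hs
      refine Algebra.adjoin_mono ?_ (hmem s hs)
      intro a ha
      simp only [hT, Finset.coe_biUnion, Set.mem_iUnion]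
      exact ⟨⟨s, hs⟩, Finset.mem_attach _ _, ha⟩
    -- enumerate T as units
    set n := T.card with hn
    obtain ⟨e⟩ : Nonempty (Fin n ≃ (T : Set A)) :=
      ⟨(Finset.equivFin T).symm⟩
    have hu : ∀ i : Fin n, IsUnit ((e i : A)) := fun i => hTsub (e i).2
    choose u hui using hu
    -- group hom ℤⁿ → Aˣ
    let f : (Fin n →₀ ℤ) →+ Additive Aˣ :=
      Finsupp.liftAddHom (fun i => zmultiplesHom (Additive Aˣ) (Additive.ofMul (u i)))
    let g : Multiplicative (Fin n →₀ ℤ) →* A :=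
      (Units.coeHom A).comp ((AddMonoidHom.toMultiplicativeLeft f))
    refine ⟨n, AddMonoidAlgebra.lift k A (Fin n →₀ ℤ) g, ?_⟩
    rw [← AlgHom.range_eq_top, eq_top_iff, ← hTtop, Algebra.adjoin_le_iff]
    intro a ha
    obtain ⟨i, hi⟩ := e.surjective ⟨a, ha⟩
    refine ⟨AddMonoidAlgebra.of k (Fin n →₀ ℤ) (Multiplicative.ofAdd (Finsupp.single i 1)), ?_⟩
    show (AddMonoidAlgebra.lift k A (Fin n →₀ ℤ) g)
      (AddMonoidAlgebra.of k (Fin n →₀ ℤ) (Multiplicative.ofAdd (Finsupp.single i 1))) = a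
    rw [AddMonoidAlgebra.lift_of]
    show ((AddMonoidHom.toMultiplicativeLeft f) (Multiplicative.ofAdd (Finsupp.single i 1)) : Aˣ) = a
    have : f (Finsupp.single i 1) = Additive.ofMul (u i) := by
      simp [f]
    have h2 : (AddMonoidHom.toMultiplicativeLeft f) (Multiplicative.ofAdd (Finsupp.single i 1))
        = u i := by
      show Additive.toMul (f (Finsupp.single i 1)) = u i
      rw [this]; rfl
    rw [h2, hui i, hi]
  · rintro ⟨n, φ, hφ⟩
    rw [eq_top_iff]
    intro a _
    obtain ⟨x, rfl⟩ := hφ a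
    have hx : x ∈ Algebra.adjoin k
        (AddMonoidAlgebra.of' k (Fin n →₀ ℤ) '' x.coeff.support) :=
      AddMonoidAlgebra.mem_adjoin_support x
    have hmap : φ x ∈ (Algebra.adjoin k
        (AddMonoidAlgebra.of' k (Fin n →₀ ℤ) '' x.coeff.support)).map φ :=
      Subalgebra.mem_map.mpr ⟨x, hx, rfl⟩
    rw [← Algebra.adjoin_image] at hmap
    refine Algebra.adjoin_mono ?_ hmap
    rintro b ⟨_, ⟨m, _, rfl⟩, rfl⟩
    -- φ (of' m) is a unit
    have hunit : IsUnit (AddMonoidAlgebra.of' k (Fin n →₀ ℤ) m) := by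
      refine IsUnit.of_mul_eq_one (AddMonoidAlgebra.of' k (Fin n →₀ ℤ) (-m)) ?_
      rw [AddMonoidAlgebra.of'_apply, AddMonoidAlgebra.of'_apply,
        AddMonoidAlgebra.single_mul_single, one_mul, add_neg_cancel]
      rfl
    exact hunit.map φ
end
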